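/- Let X and A be positive definite n×n matrices. Then the quantum relative entropy D(X|A) = Tr(X log X - X log A) equals the supremum over all self-adjoint matrices L of Tr(X) + Tr(XL) - Tr(exp(L + log A)), attained at L = log X - log A. -/

import Mathlib

open Matrix ComplexOrder

variable {n : ℕ}

/-- Apply a real function to a matrix via the spectral decomposition (functional calculus).
Returns `0` if the matrix is not Hermitian. -/
noncomputable def matFun (f : ℝ → ℝ) (A : Matrix (Fin n) (Fin n) ℂ) :
    Matrix (Fin n) (Fin n) ℂ :=
  if hA : A.IsHermitian then
    (hA.eigenvectorUnitary : Matrix (Fin n) (Fin n) ℂ) *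
      Matrix.diagonal (fun i => (f (hA.eigenvalues i) : ℂ)) *
      (star hA.eigenvectorUnitary : Matrix (Fin n) (Fin n) ℂ)
  else 0

/-- Matrix power `A^r` by functional calculus. -/
noncomputable def mpow (A : Matrix (Fin n) (Fin n) ℂ) (r : ℝ) : Matrix (Fin n) (Fin n) ℂ :=
  matFun (fun t => t ^ r) A

/-- Deformed matrix logarithm `log_q`. -/
noncomputable def mlogq (q : ℝ) (A : Matrix (Fin n) (Fin n) ℂ) : Matrix (Fin n) (Fin n) ℂ :=
  matFun (fun t => if q = 1 then Real.log t else (t ^ (q - 1) - 1) / (q - 1)) A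

/-- Deformed matrix exponential `exp_q`. -/
noncomputable def mexpq (q : ℝ) (M : Matrix (Fin n) (Fin n) ℂ) : Matrix (Fin n) (Fin n) ℂ :=
  matFun (fun s => if q = 1 then Real.exp s else ((q - 1) * s + 1) ^ (1 / (q - 1))) M

/-- Real part of the trace. -/
noncomputable def rtr (A : Matrix (Fin n) (Fin n) ℂ) : ℝ := (Matrix.trace A).re

/-- Scalar deformed logarithm. -/
noncomputable def dlog (q t : ℝ) : ℝ := if q = 1 then Real.log t else (t ^ (q - 1) - 1) / (q - 1)

/-! ### Auxiliary lemmas -/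

lemma matFun_eq {A : Matrix (Fin n) (Fin n) ℂ} (hA : A.IsHermitian) (f : ℝ → ℝ) :
    matFun f A = (hA.eigenvectorUnitary : Matrix (Fin n) (Fin n) ℂ) *
      Matrix.diagonal (fun i => (f (hA.eigenvalues i) : ℂ)) *
      (star hA.eigenvectorUnitary : Matrix (Fin n) (Fin n) ℂ) := dif_pos hA

lemma spec {A : Matrix (Fin n) (Fin n) ℂ} (hA : A.IsHermitian) :
    A = (hA.eigenvectorUnitary : Matrix (Fin n) (Fin n) ℂ) *
      Matrix.diagonal (fun i => (hA.eigenvalues i : ℂ)) *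
      (star hA.eigenvectorUnitary : Matrix (Fin n) (Fin n) ℂ) := hA.spectral_theorem

lemma umul_star (V : Matrix.unitaryGroup (Fin n) ℂ) :
    (V : Matrix (Fin n) (Fin n) ℂ) * star (V : Matrix (Fin n) (Fin n) ℂ) = 1 := by
  simpa [Unitary.coe_star] using Unitary.coe_mul_star_self V

lemma ustar_mul (V : Matrix.unitaryGroup (Fin n) ℂ) :
    star (V : Matrix (Fin n) (Fin n) ℂ) * (V : Matrix (Fin n) (Fin n) ℂ) = 1 := by
  simpa [Unitary.coe_star] using Unitary.coe_star_mul_self V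

lemma isHermitian_conj_diag (V : Matrix.unitaryGroup (Fin n) ℂ) (d : Fin n → ℝ) :
    ((V : Matrix (Fin n) (Fin n) ℂ) * Matrix.diagonal (fun i => (d i : ℂ)) *
      (star V : Matrix (Fin n) (Fin n) ℂ)).IsHermitian := by
  have : (Matrix.diagonal (fun i => (d i : ℂ))).IsHermitian := by
    rw [Matrix.IsHermitian, Matrix.diagonal_conjTranspose]
    have : star (fun i => (d i : ℂ)) = fun i => (d i : ℂ) := by
      funext i; exact Complex.conj_ofReal _
    rw [this]
  simpa [Matrix.star_eq_conjTranspose] using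
    (Matrix.isHermitian_mul_mul_conjTranspose (V : Matrix (Fin n) (Fin n) ℂ) this)

lemma matFun_isHermitian {A : Matrix (Fin n) (Fin n) ℂ} (hA : A.IsHermitian) (f : ℝ → ℝ) :
    (matFun f A).IsHermitian := by
  rw [matFun_eq hA]
  exact isHermitian_conj_diag _ _

lemma trace_conj_diag (V : Matrix.unitaryGroup (Fin n) ℂ) (d : Fin n → ℂ) :
    Matrix.trace ((V : Matrix (Fin n) (Fin n) ℂ) * Matrix.diagonal d *
      (star V : Matrix (Fin n) (Fin n) ℂ)) = ∑ i, d i := by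
  rw [Matrix.trace_mul_comm, ← Matrix.mul_assoc, Unitary.coe_star_mul_self, Matrix.one_mul,
    Matrix.trace_diagonal]

lemma rtr_conj_diag (V : Matrix.unitaryGroup (Fin n) ℂ) (d : Fin n → ℝ) :
    rtr ((V : Matrix (Fin n) (Fin n) ℂ) * Matrix.diagonal (fun i => (d i : ℂ)) *
      (star V : Matrix (Fin n) (Fin n) ℂ)) = ∑ i, d i := by
  unfold rtr
  rw [trace_conj_diag]
  have : (∑ i, ((d i : ℂ))) = ((∑ i, d i : ℝ) : ℂ) := by push_cast; rfl
  rw [this, Complex.ofReal_re]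

lemma rtr_matFun {A : Matrix (Fin n) (Fin n) ℂ} (hA : A.IsHermitian) (f : ℝ → ℝ) :
    rtr (matFun f A) = ∑ i, f (hA.eigenvalues i) := by
  rw [matFun_eq hA]
  exact rtr_conj_diag _ _

lemma rtr_herm {A : Matrix (Fin n) (Fin n) ℂ} (hA : A.IsHermitian) :
    rtr A = ∑ i, hA.eigenvalues i := by
  conv_lhs => rw [spec hA]
  exact rtr_conj_diag _ _

lemma conj_mul_conj (V : Matrix.unitaryGroup (Fin n) ℂ) (M N : Matrix (Fin n) (Fin n) ℂ) :
    ((V : Matrix (Fin n) (Fin n) ℂ) * M * star (V : Matrix (Fin n) (Fin n) ℂ)) *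
      ((V : Matrix (Fin n) (Fin n) ℂ) * N * star (V : Matrix (Fin n) (Fin n) ℂ)) =
    (V : Matrix (Fin n) (Fin n) ℂ) * (M * N) * star (V : Matrix (Fin n) (Fin n) ℂ) := by
  have h := ustar_mul V
  simp only [Matrix.mul_assoc]
  rw [← Matrix.mul_assoc (star (V : Matrix (Fin n) (Fin n) ℂ)) (V : Matrix (Fin n) (Fin n) ℂ),
    h, Matrix.one_mul]

lemma rtr_conj_mul_conj (V : Matrix.unitaryGroup (Fin n) ℂ) (a b : Fin n → ℝ) :
    rtr (((V : Matrix (Fin n) (Fin n) ℂ) * Matrix.diagonal (fun i => (a i : ℂ)) *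
        star (V : Matrix (Fin n) (Fin n) ℂ)) *
      ((V : Matrix (Fin n) (Fin n) ℂ) * Matrix.diagonal (fun i => (b i : ℂ)) *
        star (V : Matrix (Fin n) (Fin n) ℂ))) = ∑ i, a i * b i := by
  rw [conj_mul_conj, Matrix.diagonal_mul_diagonal]
  have : (fun i => (a i : ℂ) * (b i : ℂ)) = fun i => ((a i * b i : ℝ) : ℂ) := by
    funext i; push_cast; ring
  rw [this]
  exact rtr_conj_diag _ _

lemma rtr_mul_matFun_self {X : Matrix (Fin n) (Fin n) ℂ} (hX : X.IsHermitian) (f : ℝ → ℝ) :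
    rtr (X * matFun f X) = ∑ i, hX.eigenvalues i * f (hX.eigenvalues i) := by
  have h := rtr_conj_mul_conj hX.eigenvectorUnitary hX.eigenvalues
    (fun i => f (hX.eigenvalues i))
  rw [← spec hX, ← matFun_eq hX] at h
  exact h

lemma trace_unitary_conj (V : Matrix.unitaryGroup (Fin n) ℂ) (M : Matrix (Fin n) (Fin n) ℂ) :
    Matrix.trace ((V : Matrix (Fin n) (Fin n) ℂ) * M * star (V : Matrix (Fin n) (Fin n) ℂ)) =
      Matrix.trace M := by
  rw [Matrix.trace_mul_comm, ← Matrix.mul_assoc, Unitary.coe_star_mul_self, Matrix.one_mul]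

lemma trace_diag_conj (a b : Fin n → ℂ) (W : Matrix (Fin n) (Fin n) ℂ) :
    Matrix.trace (Matrix.diagonal a * W * Matrix.diagonal b * Wᴴ) =
      ∑ i, ∑ j, a i * b j * (W i j * star (W i j)) := by
  have h : ∀ i, (Matrix.diagonal a * W * Matrix.diagonal b * Wᴴ) i i
      = ∑ j, a i * b j * (W i j * star (W i j)) := by
    intro i
    rw [Matrix.mul_apply]
    refine Finset.sum_congr rfl fun j _ => ?_
    rw [Matrix.mul_diagonal, Matrix.diagonal_mul, Matrix.conjTranspose_apply]
    ring
  simp only [Matrix.trace, Matrix.diag_apply]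
  exact Finset.sum_congr rfl fun i _ => h i

lemma row_sums {W : Matrix (Fin n) (Fin n) ℂ} (h : W * Wᴴ = 1) (i : Fin n) :
    ∑ j, Complex.normSq (W i j) = 1 := by
  have h1 : (W * Wᴴ) i i = (1 : Matrix (Fin n) (Fin n) ℂ) i i := by rw [h]
  rw [Matrix.mul_apply, Matrix.one_apply_eq] at h1
  have h2 : ∑ j, W i j * (Wᴴ) j i = ∑ j, (Complex.normSq (W i j) : ℂ) := by
    refine Finset.sum_congr rfl fun j _ => ?_
    rw [Matrix.conjTranspose_apply, ← Complex.mul_conj]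
    rfl
  rw [h2] at h1
  have := congrArg Complex.re h1
  push_cast at this
  simpa using this

lemma col_sums {W : Matrix (Fin n) (Fin n) ℂ} (h : Wᴴ * W = 1) (j : Fin n) :
    ∑ i, Complex.normSq (W i j) = 1 := by
  have := row_sums (W := Wᴴ) (by simpa using h) j
  simpa [Matrix.conjTranspose_apply, Complex.normSq_conj] using this

lemma rearrange (U V : Matrix.unitaryGroup (Fin n) ℂ) (a b : Fin n → ℝ) :
    (U : Matrix (Fin n) (Fin n) ℂ) *
      (Matrix.diagonal (fun i => (a i : ℂ)) *
        (star (U : Matrix (Fin n) (Fin n) ℂ) * (V : Matrix (Fin n) (Fin n) ℂ)) *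
        Matrix.diagonal (fun j => (b j : ℂ)) *
        (star (U : Matrix (Fin n) (Fin n) ℂ) * (V : Matrix (Fin n) (Fin n) ℂ))ᴴ) *
      star (U : Matrix (Fin n) (Fin n) ℂ)
    = ((U : Matrix (Fin n) (Fin n) ℂ) * Matrix.diagonal (fun i => (a i : ℂ)) *
        star (U : Matrix (Fin n) (Fin n) ℂ)) *
      ((V : Matrix (Fin n) (Fin n) ℂ) * Matrix.diagonal (fun j => (b j : ℂ)) *
        star (V : Matrix (Fin n) (Fin n) ℂ)) := by
  have hUU' : (U : Matrix (Fin n) (Fin n) ℂ) * star (U : Matrix (Fin n) (Fin n) ℂ) = 1 :=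
    umul_star U
  rw [show (star (U : Matrix (Fin n) (Fin n) ℂ) * (V : Matrix (Fin n) (Fin n) ℂ))ᴴ =
    star (star (U : Matrix (Fin n) (Fin n) ℂ) * (V : Matrix (Fin n) (Fin n) ℂ)) from rfl,
    StarMul.star_mul, star_star]
  simp only [Matrix.mul_assoc]
  rw [hUU']
  simp only [Matrix.mul_one]

lemma rtr_conj_cross (U V : Matrix.unitaryGroup (Fin n) ℂ) (a b : Fin n → ℝ) :
    rtr (((U : Matrix (Fin n) (Fin n) ℂ) * Matrix.diagonal (fun i => (a i : ℂ)) *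
        star (U : Matrix (Fin n) (Fin n) ℂ)) *
      ((V : Matrix (Fin n) (Fin n) ℂ) * Matrix.diagonal (fun j => (b j : ℂ)) *
        star (V : Matrix (Fin n) (Fin n) ℂ))) =
      ∑ i, ∑ j, a i * b j *
        Complex.normSq ((star (U : Matrix (Fin n) (Fin n) ℂ) *
          (V : Matrix (Fin n) (Fin n) ℂ)) i j) := by
  rw [← rearrange U V a b]
  unfold rtr
  rw [trace_unitary_conj, trace_diag_conj]
  set W := star (U : Matrix (Fin n) (Fin n) ℂ) * (V : Matrix (Fin n) (Fin n) ℂ) with hW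
  have : (∑ i, ∑ j, (a i : ℂ) * (b j : ℂ) * (W i j * star (W i j))) =
      ((∑ i, ∑ j, a i * b j * Complex.normSq (W i j) : ℝ) : ℂ) := by
    push_cast
    refine Finset.sum_congr rfl fun i _ => Finset.sum_congr rfl fun j _ => ?_
    rw [Complex.star_def, Complex.mul_conj]
  rw [this, Complex.ofReal_re]

lemma rtr_cross {X H : Matrix (Fin n) (Fin n) ℂ} (hX : X.IsHermitian) (hH : H.IsHermitian) :
    rtr (X * H) = ∑ i, ∑ j,
      hX.eigenvalues i * hH.eigenvalues j *
        Complex.normSq ((star (hX.eigenvectorUnitary : Matrix (Fin n) (Fin n) ℂ) *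
          (hH.eigenvectorUnitary : Matrix (Fin n) (Fin n) ℂ)) i j) := by
  have h := rtr_conj_cross hX.eigenvectorUnitary hH.eigenvectorUnitary
    hX.eigenvalues hH.eigenvalues
  rw [← spec hX, ← spec hH] at h
  exact h

lemma scalar_klein {a m : ℝ} (ha : 0 < a) : a + a * m - Real.exp m ≤ a * Real.log a := by
  have h := Real.add_one_le_exp (m - Real.log a)
  have h2 : a * (m - Real.log a + 1) ≤ a * Real.exp (m - Real.log a) :=
    mul_le_mul_of_nonneg_left h ha.le
  rw [Real.exp_sub, Real.exp_log ha] at h2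
  have h3 : a * (Real.exp m / a) = Real.exp m := by field_simp
  nlinarith [h2, h3]

lemma rtr_add (A B : Matrix (Fin n) (Fin n) ℂ) : rtr (A + B) = rtr A + rtr B := by
  simp [rtr, Matrix.trace_add]

lemma rtr_sub (A B : Matrix (Fin n) (Fin n) ℂ) : rtr (A - B) = rtr A - rtr B := by
  simp [rtr, Matrix.trace_sub]

/-- Klein / Gibbs variational inequality. -/
lemma klein {X H : Matrix (Fin n) (Fin n) ℂ} (hX : X.PosDef) (hH : H.IsHermitian) :
    rtr X + rtr (X * H) - rtr (matFun Real.exp H) ≤ rtr (X * matFun Real.log X) := by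
  set U := (hX.1.eigenvectorUnitary : Matrix (Fin n) (Fin n) ℂ) with hU
  set V := (hH.eigenvectorUnitary : Matrix (Fin n) (Fin n) ℂ) with hV
  set lam := hX.1.eigenvalues
  set mu := hH.eigenvalues
  set W := star U * V with hWdef
  set p := fun i j => Complex.normSq (W i j) with hp
  have hWW : W * Wᴴ = 1 := by
    rw [show Wᴴ = star W from rfl, hWdef, StarMul.star_mul, star_star,
      Matrix.mul_assoc, ← Matrix.mul_assoc V, hV, umul_star, Matrix.one_mul, hU, ustar_mul]
  have hWW' : Wᴴ * W = 1 := by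
    rw [show Wᴴ = star W from rfl, hWdef, StarMul.star_mul, star_star,
      Matrix.mul_assoc, ← Matrix.mul_assoc U, hU, umul_star, Matrix.one_mul, hV, ustar_mul]
  have hrow : ∀ i, ∑ j, p i j = 1 := row_sums hWW
  have hcol : ∀ j, ∑ i, p i j = 1 := col_sums hWW'
  have hppos : ∀ i j, 0 ≤ p i j := fun i j => Complex.normSq_nonneg _
  have hlam : ∀ i, 0 < lam i := hX.eigenvalues_pos
  have h1 : rtr X = ∑ i, lam i := rtr_herm hX.1
  have h2 : rtr (X * H) = ∑ i, ∑ j, lam i * mu j * p i j := rtr_cross hX.1 hH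
  have h3 : rtr (matFun Real.exp H) = ∑ j, Real.exp (mu j) := rtr_matFun hH _
  have h4 : rtr (X * matFun Real.log X) = ∑ i, lam i * Real.log (lam i) :=
    rtr_mul_matFun_self hX.1 _
  rw [h1, h2, h3, h4]
  have e1 : ∑ i, lam i = ∑ i, ∑ j, p i j * lam i := by
    refine Finset.sum_congr rfl fun i _ => ?_
    rw [← Finset.sum_mul, hrow, one_mul]
  have e3 : ∑ j, Real.exp (mu j) = ∑ i, ∑ j, p i j * Real.exp (mu j) := by
    rw [Finset.sum_comm]
    refine Finset.sum_congr rfl fun j _ => ?_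
    rw [← Finset.sum_mul, hcol, one_mul]
  have e4 : ∑ i, lam i * Real.log (lam i)
      = ∑ i, ∑ j, p i j * (lam i * Real.log (lam i)) := by
    refine Finset.sum_congr rfl fun i _ => ?_
    rw [← Finset.sum_mul, hrow, one_mul]
  rw [e1, e3, e4]
  have expand : ∑ i, ∑ j, (p i j * lam i + lam i * mu j * p i j - p i j * Real.exp (mu j))
      = (∑ i, ∑ j, p i j * lam i) + (∑ i, ∑ j, lam i * mu j * p i j)
        - ∑ i, ∑ j, p i j * Real.exp (mu j) := by
    simp [Finset.sum_add_distrib, Finset.sum_sub_distrib]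
  rw [← expand]
  refine Finset.sum_le_sum fun i _ => Finset.sum_le_sum fun j _ => ?_
  have h := scalar_klein (a := lam i) (m := mu j) (hlam i)
  have hp0 := hppos i j
  nlinarith [mul_le_mul_of_nonneg_left h hp0]

lemma commute_diag {W : Matrix (Fin n) (Fin n) ℂ} {a b : Fin n → ℝ}
    (h : W * Matrix.diagonal (fun i => (a i : ℂ)) = Matrix.diagonal (fun i => (b i : ℂ)) * W)
    (g : ℝ → ℝ) :
    W * Matrix.diagonal (fun i => (g (a i) : ℂ))
      = Matrix.diagonal (fun i => (g (b i) : ℂ)) * W := by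
  ext i j
  have hij : W i j * (a j : ℂ) = (b i : ℂ) * W i j := by
    have h' := congrFun (congrFun h i) j
    simpa [Matrix.mul_diagonal, Matrix.diagonal_mul] using h'
  rw [Matrix.mul_diagonal, Matrix.diagonal_mul]
  by_cases hW : W i j = 0
  · simp [hW]
  · have hab : (a j : ℂ) = (b i : ℂ) := by
      rw [mul_comm ((b i : ℂ)) (W i j)] at hij
      exact mul_left_cancel₀ hW hij
    have hab' : a j = b i := by exact_mod_cast hab
    rw [show g (a j) = g (b i) from by rw [hab'], mul_comm]

lemma matFun_exp_log {X : Matrix (Fin n) (Fin n) ℂ} (hX : X.PosDef) :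
    matFun Real.exp (matFun Real.log X) = X := by
  have hB : (matFun Real.log X).IsHermitian := matFun_isHermitian hX.1 _
  set U := (hX.1.eigenvectorUnitary : Matrix (Fin n) (Fin n) ℂ) with hU
  set V := (hB.eigenvectorUnitary : Matrix (Fin n) (Fin n) ℂ) with hV
  set lam := hX.1.eigenvalues
  set nu := hB.eigenvalues
  have hUU : star U * U = 1 := ustar_mul _
  have hUU' : U * star U = 1 := umul_star _
  have hVV : star V * V = 1 := ustar_mul _
  have hVV' : V * star V = 1 := umul_star _
  have hdecomp : U * Matrix.diagonal (fun i => (Real.log (lam i) : ℂ)) * star U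
      = V * Matrix.diagonal (fun i => (nu i : ℂ)) * star V := by
    rw [← matFun_eq hX.1 Real.log]
    exact spec hB
  set W := star V * U with hWdef
  have e1 : W * Matrix.diagonal (fun i => (Real.log (lam i) : ℂ))
      = star V * (U * Matrix.diagonal (fun i => (Real.log (lam i) : ℂ)) * star U) * U := by
    rw [hWdef]
    simp only [Matrix.mul_assoc, hUU, Matrix.mul_one]
  have e2 : star V * (V * Matrix.diagonal (fun i => (nu i : ℂ)) * star V) * U
      = Matrix.diagonal (fun i => (nu i : ℂ)) * W := by
    rw [hWdef]
    simp only [← Matrix.mul_assoc]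
    rw [hVV, Matrix.one_mul]
  have hcomm : W * Matrix.diagonal (fun i => (Real.log (lam i) : ℂ))
      = Matrix.diagonal (fun i => (nu i : ℂ)) * W := by
    rw [e1, hdecomp, e2]
  have hcomm2 := commute_diag (a := fun i => Real.log (lam i)) (b := nu) hcomm Real.exp
  have hexplog : (fun i => ((Real.exp (Real.log (lam i)) : ℝ) : ℂ)) = fun i => (lam i : ℂ) := by
    funext i; rw [Real.exp_log (hX.eigenvalues_pos i)]
  rw [hexplog] at hcomm2
  have hWsU : W * star U = star V := by
    rw [hWdef, Matrix.mul_assoc, hUU', Matrix.mul_one]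
  have hVW : V * W = U := by
    rw [hWdef, ← Matrix.mul_assoc, hVV', Matrix.one_mul]
  rw [matFun_eq hB Real.exp]
  calc V * Matrix.diagonal (fun i => (Real.exp (nu i) : ℂ)) * star V
      = V * Matrix.diagonal (fun i => (Real.exp (nu i) : ℂ)) * (W * star U) := by rw [hWsU]
    _ = V * (Matrix.diagonal (fun i => (Real.exp (nu i) : ℂ)) * W) * star U := by
        simp only [Matrix.mul_assoc]
    _ = V * (W * Matrix.diagonal (fun i => (lam i : ℂ))) * star U := by rw [← hcomm2]
    _ = (V * W) * Matrix.diagonal (fun i => (lam i : ℂ)) * star U := by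
        simp only [Matrix.mul_assoc]
    _ = U * Matrix.diagonal (fun i => (lam i : ℂ)) * star U := by rw [hVW]
    _ = X := (spec hX.1).symm

theorem relative_entropy_variational {n : ℕ}
    (X A : Matrix (Fin n) (Fin n) ℂ) (hX : X.PosDef) (hA : A.PosDef) :
    (∀ L : Matrix (Fin n) (Fin n) ℂ, L.IsHermitian →
      rtr X + rtr (X * L) - rtr (matFun Real.exp (L + matFun Real.log A)) ≤
        rtr (X * (matFun Real.log X - matFun Real.log A))) ∧
    rtr X + rtr (X * (matFun Real.log X - matFun Real.log A)) -
        rtr (matFun Real.exp ((matFun Real.log X - matFun Real.log A) + matFun Real.log A)) =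
      rtr (X * (matFun Real.log X - matFun Real.log A)) := by
  constructor
  · intro L hL
    have hH : (L + matFun Real.log A).IsHermitian := hL.add (matFun_isHermitian hA.1 _)
    have h := klein hX hH
    rw [Matrix.mul_add, rtr_add] at h
    rw [Matrix.mul_sub, rtr_sub]
    linarith
  · rw [sub_add_cancel, matFun_exp_log hX]
    ring
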